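/- arXiv:2408.15692 — 2 statements merged into one kernel-verified Lean document; each statement's English description precedes it below -/
import Mathlib

section
/- Let 𝔉 be an iterated graph system satisfying Assumption (GR). Then: (i) every path in a replacement graph containing at most two vertices, and every non-collapsing path, is an intersection path; (ii) if θ is an intersection path in G_m and {θ_n}_{n∈ℕ} is a witnessing sequence of paths, then θ_n is non-collapsing for all sufficiently large n; (iii) 𝔉 is of bounded geometry if and only if sup_θ diam_{G_n}(θ) < ∞, where the supremum is over all non-collapsing paths θ in all replacement graphs G_n. -/
namespace IGSP

/-- An iterated graph system: a finite connected oriented graph `G₁ = (S, E)`, a set of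
types `T` with a surjective typing map on edges, and nonempty gluing rules `I_t ⊆ S × S`. -/
structure System (S T : Type) where
  E : S → S → Prop
  not_both : ∀ x y : S, E x y → ¬ E y x
  irrefl : ∀ x : S, ¬ E x x
  conn : ∀ x y : S, Relation.ReflTransGen (fun a b => E a b ∨ E b a) x y
  typ : S → S → T
  typ_surj : ∀ t : T, ∃ x y, E x y ∧ typ x y = t
  glue : T → S → S → Prop
  glue_nonempty : ∀ t : T, ∃ x y, glue t x y

variable {S T : Type}

/-- Words of length `m` over the symbol set `S`. -/
abbrev Word (S : Type) (m : ℕ) := Fin m → S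

open Classical in
/-- The replacement graphs together with their typing functions, defined by recursion on
the length of words: `G₁ = (S,E)` and an oriented edge `(w,v) ∈ E_{m+1}` holds iff either
the length-`m` prefixes agree and the last symbols form an edge of `G₁`, or the prefixes
form an edge of `E_m` and the last symbols belong to the gluing rule of its type. -/
noncomputable def replData [Nonempty T] (F : System S T) :
    (L : ℕ) → (Word S L → Word S L → Prop) × (Word S L → Word S L → T)
  | 0 => ⟨fun _ _ => False, fun _ _ => Classical.arbitrary T⟩
  | 1 => ⟨fun w v => F.E (w 0) (v 0), fun w v => F.typ (w 0) (v 0)⟩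
  | L + 2 =>
      ⟨fun w v =>
        (Fin.init w = Fin.init v ∧ F.E (w (Fin.last (L + 1))) (v (Fin.last (L + 1)))) ∨
        ((replData F (L + 1)).1 (Fin.init w) (Fin.init v) ∧
          F.glue ((replData F (L + 1)).2 (Fin.init w) (Fin.init v))
            (w (Fin.last (L + 1))) (v (Fin.last (L + 1)))),
       fun w v =>
        if Fin.init w = Fin.init v then F.typ (w (Fin.last (L + 1))) (v (Fin.last (L + 1)))
        else (replData F (L + 1)).2 (Fin.init w) (Fin.init v)⟩

/-- The oriented edge relation of the replacement graph on words of length `L`. -/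
def edge [Nonempty T] (F : System S T) (L : ℕ) (w v : Word S L) : Prop :=
  (replData F L).1 w v

/-- The typing function of the replacement graph on words of length `L`. -/
noncomputable def etyp [Nonempty T] (F : System S T) (L : ℕ) (w v : Word S L) : T :=
  (replData F L).2 w v

/-- The unoriented edge ("{w,v} ∈ E_L") relation. -/
def adjW [Nonempty T] (F : System S T) (L : ℕ) (w v : Word S L) : Prop :=
  edge F L w v ∨ edge F L v w

/-- The replacement graph `G_L` as a simple graph on words of length `L`. -/
noncomputable def replGraph [Nonempty T] (F : System S T) (L : ℕ) : SimpleGraph (Word S L) where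
  Adj w v := w ≠ v ∧ adjW F L w v
  symm := by
    constructor
    intro w v h
    exact ⟨Ne.symm h.1, Or.symm h.2⟩
  loopless := by
    constructor
    intro w h
    exact h.1 rfl

/-- The degree of a word `w` in the replacement graph `G_L`: the number of `v` with
`{w,v} ∈ E_L`. -/
noncomputable def degGm [Nonempty T] (F : System S T) (L : ℕ) (w : Word S L) : ℕ :=
  {v : Word S L | adjW F L w v}.ncard

/-- `I_{t,+}`, the set of symbols occurring as the first coordinate of the gluing rule. -/
def Iplus (F : System S T) (t : T) : Set S := {a | ∃ b, F.glue t a b}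

/-- `I_{t,-}`, the set of symbols occurring as the second coordinate of the gluing rule. -/
def Iminus (F : System S T) (t : T) : Set S := {b | ∃ a, F.glue t a b}

/-- `I_{t,★}` where the orientation `★` is encoded by a boolean: `true = +`, `false = -`. -/
def Iset (F : System S T) (t : T) : Bool → Set S
  | true => Iplus F t
  | false => Iminus F t

/-- `I_{t,★}^{(m)} = (I_{t,★})^m ⊆ W_m`. -/
def IsetW (F : System S T) (t : T) (b : Bool) (m : ℕ) : Set (Word S m) :=
  {w | ∀ i, w i ∈ Iset F t b}

/-- The boundary `∂G_m = ⋃_{(t,★)} I_{t,★}^{(m)}`. -/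
def boundaryW (F : System S T) (m : ℕ) : Set (Word S m) :=
  ⋃ (t : T) (b : Bool), IsetW F t b m

/-- (GR1): every symbol has at most one gluing partner for each type and orientation. -/
def GR1 (F : System S T) : Prop :=
  ∀ (t : T) (s : S), {b | F.glue t s b}.Subsingleton ∧ {a | F.glue t a s}.Subsingleton

/-- (GR2): for no type, orientation and symbol are the gluing-partner count and the
corresponding oriented degree in `G₁` simultaneously nonzero. -/
def GR2 (F : System S T) : Prop :=
  ∀ (t : T) (s : S),
    ¬ ((∃ b, F.glue t s b) ∧ ∃ b, F.E s b ∧ F.typ s b = t) ∧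
    ¬ ((∃ a, F.glue t a s) ∧ ∃ a, F.E a s ∧ F.typ a s = t)

/-- (GR3): `I_{t,-} ∩ I_{t,+} = ∅` for every type `t`. -/
def GR3 (F : System S T) : Prop := ∀ t : T, Iminus F t ∩ Iplus F t = ∅

/-- Assumption (GR). -/
def GR (F : System S T) : Prop := GR1 F ∧ GR2 F ∧ GR3 F

/-- A path in the replacement graph `G_L`: a nonempty list of words with consecutive
entries joined by an edge. -/
def IsPath [Nonempty T] (F : System S T) (L : ℕ) (θ : List (Word S L)) : Prop :=
  θ ≠ [] ∧ θ.Chain' (adjW F L)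

open Classical in
/-- The projection `π_{L,k}` of a path: take length-`k` prefixes and remove consecutive
repetitions. -/
noncomputable def proj {k L : ℕ} (h : k ≤ L) (θ : List (Word S L)) : List (Word S k) :=
  (θ.map fun w => fun i => w (Fin.castLE h i)).destutter (· ≠ ·)

/-- An intersection path in `G_{m+1}`: a path admitting a compatible sequence of paths at
all levels with uniformly bounded lengths. -/
def IsIntersectionPath [Nonempty T] (F : System S T) (m : ℕ) (θ : List (Word S (m + 1))) :
    Prop :=
  IsPath F (m + 1) θ ∧
  ∃ Θ : (n : ℕ) → List (Word S (n + 1)),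
    Θ m = θ ∧ (∀ n, IsPath F (n + 1) (Θ n)) ∧
    (∀ (k n : ℕ) (h : k ≤ n), proj (Nat.succ_le_succ h) (Θ n) = Θ k) ∧
    ∃ C : ℕ, ∀ n, (Θ n).length ≤ C

/-- The fundamental neighbourhood `𝒩(w)`. -/
def nbhd [Nonempty T] (F : System S T) (m : ℕ) (w : Word S (m + 1)) :
    Set (Word S (m + 1)) :=
  {v | ∃ θ, IsIntersectionPath F m θ ∧ θ.head? = some w ∧ θ.getLast? = some v}

/-- Bounded geometry: the diameters of fundamental neighbourhoods are uniformly bounded. -/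
def BoundedGeometry [Nonempty T] (F : System S T) : Prop :=
  ∃ D : ℕ, ∀ (m : ℕ) (w : Word S (m + 1)), ∀ v₁ ∈ nbhd F m w, ∀ v₂ ∈ nbhd F m w,
    (replGraph F (m + 1)).dist v₁ v₂ ≤ D

/-- `|w ∧ v| < L` for words of length `L`: the words differ at some index below the last. -/
def ncRel {L : ℕ} (w v : Word S L) : Prop := ∃ j : Fin L, (j : ℕ) + 1 < L ∧ w j ≠ v j

/-- A non-collapsing path: consecutive vertices satisfy `|w ∧ v| < L`. -/
def NonCollapsing {L : ℕ} (θ : List (Word S L)) : Prop := θ.Chain' ncRel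

/-- A mapping between iterated graph systems. -/
structure Hom {S T S' T' : Type} (F : System S T) (F' : System S' T') where
  toFun : S → S'
  map_edge : ∀ x y, (F.E x y ∨ F.E y x) →
    (toFun x = toFun y ∨ F'.E (toFun x) (toFun y) ∨ F'.E (toFun y) (toFun x))
  glue_collapse : ∀ w1 v1, F.E w1 v1 → toFun w1 = toFun v1 →
    ∀ w2 v2, F.glue (F.typ w1 v1) w2 v2 → toFun w2 = toFun v2
  glue_fwd : ∀ w1 v1, F.E w1 v1 → F'.E (toFun w1) (toFun v1) →
    ∀ w2 v2, F.glue (F.typ w1 v1) w2 v2 →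
      F'.glue (F'.typ (toFun w1) (toFun v1)) (toFun w2) (toFun v2)
  glue_rev : ∀ w1 v1, F.E w1 v1 → F'.E (toFun v1) (toFun w1) →
    ∀ w2 v2, F.glue (F.typ w1 v1) w2 v2 →
      F'.glue (F'.typ (toFun v1) (toFun w1)) (toFun v2) (toFun w2)

/-- An isomorphism between iterated graph systems: a pair of mutually inverse mappings. -/
structure Iso {S T S' T' : Type} (F : System S T) (F' : System S' T') where
  hom : Hom F F'
  inv : Hom F' F
  left_inv : ∀ x, inv.toFun (hom.toFun x) = x
  right_inv : ∀ y, hom.toFun (inv.toFun y) = y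

/-- A flipping symmetry of type `t`. -/
def IsFlip (F : System S T) (t : T) (η : Iso F F) : Prop :=
  (∀ w ∈ Iplus F t, F.glue t w (η.hom.toFun w)) ∧
  (∀ v ∈ Iminus F t, F.glue t (η.hom.toFun v) v)

/-- The data of a reflection symmetry of an iterated graph system: an involutive
isomorphism together with the partition `S = C ∪ D ∪ Δ` satisfying (D1)-(D4). -/
structure ReflData (F : System S T) where
  iso : Iso F F
  C : Set S
  D : Set S
  invol : ∀ x, iso.hom.toFun (iso.hom.toFun x) = x
  C_not_fixed : ∀ x ∈ C, iso.hom.toFun x ≠ x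
  D_not_fixed : ∀ x ∈ D, iso.hom.toFun x ≠ x
  CD_disjoint : ∀ x, ¬ (x ∈ C ∧ x ∈ D)
  cover : ∀ x, x ∈ C ∨ x ∈ D ∨ iso.hom.toFun x = x
  image_C : iso.hom.toFun '' C = D
  edge_CD : ∀ x ∈ C, ∀ y ∈ D, (F.E x y ∨ F.E y x) → iso.hom.toFun x = y
  D2 : ∀ w1 v1, F.E w1 v1 → iso.hom.toFun v1 = v1 →
    (w1 ∈ C → Iminus F (F.typ w1 v1) ⊆ C ∪ {x | iso.hom.toFun x = x}) ∧
    (w1 ∈ D → Iminus F (F.typ w1 v1) ⊆ D ∪ {x | iso.hom.toFun x = x})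
  D3 : ∀ w1 v1, F.E w1 v1 → iso.hom.toFun w1 = w1 →
    (v1 ∈ C → Iplus F (F.typ w1 v1) ⊆ C ∪ {x | iso.hom.toFun x = x}) ∧
    (v1 ∈ D → Iplus F (F.typ w1 v1) ⊆ D ∪ {x | iso.hom.toFun x = x})
  D4 : ∀ w1 v1, F.E w1 v1 → iso.hom.toFun w1 = w1 → iso.hom.toFun v1 = v1 →
    ∀ w2 v2, F.glue (F.typ w1 v1) w2 v2 →
      (w2 ∈ C ∧ v2 ∈ C) ∨ (w2 ∈ D ∧ v2 ∈ D) ∨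
      (iso.hom.toFun w2 = w2 ∧ iso.hom.toFun v2 = v2)

/-- (D5): a reflection symmetry. -/
def IsRefl {F : System S T} (R : ReflData F) : Prop :=
  ∀ w1 v1, F.E w1 v1 → w1 ∈ R.C → v1 ∈ R.D →
    ∀ w2 v2, F.glue (F.typ w1 v1) w2 v2 → R.iso.hom.toFun w2 = v2

/-- (D5*): a separative reflection symmetry. -/
def IsSepRefl {F : System S T} (R : ReflData F) : Prop :=
  ∀ x ∈ R.C, ∀ y ∈ R.D, ¬ (F.E x y ∨ F.E y x)

/-- The coordinatewise action of a reflection symmetry on words. -/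
def wordMap {F : System S T} (R : ReflData F) {m : ℕ} (w : Word S m) : Word S m :=
  fun i => R.iso.hom.toFun (w i)

/-- The lifted set `C_α^{(m)}`: words whose first non-fixed coordinate lies in `C`. -/
def liftC {F : System S T} (R : ReflData F) (m : ℕ) : Set (Word S m) :=
  {w | ∃ k : Fin m, w k ∈ R.C ∧ ∀ j < k, R.iso.hom.toFun (w j) = w j}

/-- The lifted set `D_α^{(m)}`: words whose first non-fixed coordinate lies in `D`. -/
def liftD {F : System S T} (R : ReflData F) (m : ℕ) : Set (Word S m) :=
  {w | ∃ k : Fin m, w k ∈ R.D ∧ ∀ j < k, R.iso.hom.toFun (w j) = w j}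

end IGSP
namespace IGSP

variable {S T : Type}

/-- An antisymmetric function supported on the edges of a graph. -/
def Antisym {V : Type} (G : SimpleGraph V) (Φ : V → V → ℝ) : Prop :=
  (∀ x y, Φ x y = - Φ y x) ∧ ∀ x y, ¬ G.Adj x y → Φ x y = 0

/-- The divergence of `Φ` at a vertex. -/
noncomputable def fdiv {V : Type} (Φ : V → V → ℝ) (x : V) : ℝ := ∑ᶠ y, Φ x y

/-- A flow from `A` to `B`. -/
def IsFlow {V : Type} (G : SimpleGraph V) (A B : Set V) (Φ : V → V → ℝ) : Prop :=
  Antisym G Φ ∧ ∀ x, x ∉ A ∪ B → fdiv Φ x = 0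

/-- The total flow `I(Φ) = Σ_{x ∈ A} div Φ (x)`. -/
noncomputable def totalFlow {V : Type} (A : Set V) (Φ : V → V → ℝ) : ℝ :=
  ∑ᶠ x ∈ A, fdiv Φ x

/-- The `q`-energy `E_q(Φ) = Σ_{{x,y} ∈ E} |Φ(x,y)|^q` (each unordered edge counted once). -/
noncomputable def energy {V : Type} (q : ℝ) (Φ : V → V → ℝ) : ℝ :=
  (∑ᶠ x, ∑ᶠ y, |Φ x y| ^ q) / 2

/-- The degree of a vertex of a graph. -/
noncomputable def degOf {V : Type} (G : SimpleGraph V) (x : V) : ℕ := {y | G.Adj x y}.ncard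

/-- The maximal degree of a finite graph. -/
noncomputable def maxDeg {V : Type} [Fintype V] (G : SimpleGraph V) : ℕ :=
  Finset.univ.sup fun x => degOf G x

/-- The diameter of a finite graph (in the shortest-path metric). -/
noncomputable def gdiam {V : Type} [Fintype V] (G : SimpleGraph V) : ℕ :=
  Finset.univ.sup fun pr : V × V => G.dist pr.1 pr.2

/-- The set of vertices of a path. -/
def pathVerts {V : Type} (θ : List V) : Set V := {x | x ∈ θ}

/-- A density is admissible for a path family if it is nonnegative and its sum along
every path of the family is at least 1. -/
def Admissible {V : Type} (Θ : Set (List V)) (ρ : V → ℝ) : Prop :=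
  (∀ x, 0 ≤ ρ x) ∧ ∀ θ ∈ Θ, 1 ≤ ∑ᶠ x ∈ pathVerts θ, ρ x

/-- The discrete (vertex) `p`-modulus of a family of paths. -/
noncomputable def modulus {V : Type} (p : ℝ) (Θ : Set (List V)) : ℝ :=
  sInf {M | ∃ ρ : V → ℝ, Admissible Θ ρ ∧ M = ∑ᶠ x, ρ x ^ p}

/-- The `p`-resistance `E_q(A,B,G)`: infimal `q`-energy of unit flows from `A` to `B`. -/
noncomputable def resistance {V : Type} (q : ℝ) (G : SimpleGraph V) (A B : Set V) : ℝ :=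
  sInf {e | ∃ Φ, IsFlow G A B Φ ∧ totalFlow A Φ = 1 ∧ e = energy q Φ}

/-- The family `Θ_𝔞^{(m)}` of paths in `G_m` from `I_{t₁,★₁}^{(m)}` to `I_{t₂,★₂}^{(m)}`. -/
def ThetaIGS [Nonempty T] (F : System S T) (m : ℕ) (t₁ : T) (b₁ : Bool) (t₂ : T)
    (b₂ : Bool) : Set (List (Word S m)) :=
  {θ | IsPath F m θ ∧ (∃ w ∈ IsetW F t₁ b₁ m, θ.head? = some w) ∧
    ∃ v ∈ IsetW F t₂ b₂ m, θ.getLast? = some v}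

/-- `ℒ^{(m)}`, the collection of sets `I_{t,★}^{(m)}`. -/
def scriptL [Nonempty T] (F : System S T) (m : ℕ) : Set (Set (Word S m)) :=
  {A | ∃ (t : T) (b : Bool), A = IsetW F t b m}

/-- The added vertices `v_L` (for `L ∈ ℒ^{(m)}` and `v ∈ L`) of the graph `G̃_m`. -/
def AddedV [Nonempty T] (F : System S T) (m : ℕ) :=
  {pr : Set (Word S m) × Word S m // pr.1 ∈ scriptL F m ∧ pr.2 ∈ pr.1}

/-- The vertex set of the graph `G̃_m`. -/
def TildeV [Nonempty T] (F : System S T) (m : ℕ) := Word S m ⊕ AddedV F m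

/-- The graph `G̃_m`, obtained from `G_m` by attaching a pendant vertex `v_L` at every
`v ∈ L` for every `L ∈ ℒ^{(m)}`. -/
noncomputable def tildeG [Nonempty T] (F : System S T) (m : ℕ) : SimpleGraph (TildeV F m) where
  Adj x y :=
    match x, y with
    | Sum.inl w, Sum.inl v => w ≠ v ∧ adjW F m w v
    | Sum.inl w, Sum.inr pr => pr.1.2 = w
    | Sum.inr pr, Sum.inl w => pr.1.2 = w
    | Sum.inr _, Sum.inr _ => False
  symm := by
    constructor
    rintro (w | pr) (v | qr) h
    · exact ⟨Ne.symm h.1, Or.symm h.2⟩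
    · exact h
    · exact h
    · exact h.elim
  loopless := by
    constructor
    rintro (w | pr) h
    · exact h.1 rfl
    · exact h

/-- The set `L̃ = {v_L : v ∈ L}` of added vertices over `L`. -/
def tildeSet [Nonempty T] (F : System S T) (m : ℕ) (L : Set (Word S m)) :
    Set (TildeV F m) :=
  {x | ∃ pr : AddedV F m, pr.1.1 = L ∧ x = Sum.inr pr}

/-- A flow basis on `G̃_m`: a family of unit flows between the added vertex sets of all
pairs of distinct members of `ℒ^{(m)}`, satisfying (FB1)–(FB4). -/
structure FlowBasis [Nonempty T] (F : System S T) (ηfam : T → Iso F F) (m : ℕ) where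
  flow : (L₁ L₂ : Set (Word S m)) → L₁ ∈ scriptL F m → L₂ ∈ scriptL F m → L₁ ≠ L₂ →
    TildeV F m → TildeV F m → ℝ
  flow_isFlow : ∀ (L₁ L₂ : Set (Word S m)) (h₁ : L₁ ∈ scriptL F m) (h₂ : L₂ ∈ scriptL F m)
    (hne : L₁ ≠ L₂),
    IsFlow (tildeG F m) (tildeSet F m L₁) (tildeSet F m L₂) (flow L₁ L₂ h₁ h₂ hne)
  flow_unit : ∀ (L₁ L₂ : Set (Word S m)) (h₁ : L₁ ∈ scriptL F m) (h₂ : L₂ ∈ scriptL F m)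
    (hne : L₁ ≠ L₂), totalFlow (tildeSet F m L₁) (flow L₁ L₂ h₁ h₂ hne) = 1
  fb2 : ∀ (L₁ L₂ : Set (Word S m)) (h₁ : L₁ ∈ scriptL F m) (h₂ : L₂ ∈ scriptL F m)
    (hne : L₁ ≠ L₂) (pr : AddedV F m), pr.1.1 ≠ L₁ → pr.1.1 ≠ L₂ →
    flow L₁ L₂ h₁ h₂ hne (Sum.inr pr) (Sum.inl pr.1.2) = 0
  fb3_out : ∀ (L L₁ L₂ : Set (Word S m)) (hL : L ∈ scriptL F m) (h₁ : L₁ ∈ scriptL F m)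
    (h₂ : L₂ ∈ scriptL F m) (hne₁ : L ≠ L₁) (hne₂ : L ≠ L₂) (pr : AddedV F m),
    pr.1.1 = L →
    flow L L₁ hL h₁ hne₁ (Sum.inr pr) (Sum.inl pr.1.2) =
      flow L L₂ hL h₂ hne₂ (Sum.inr pr) (Sum.inl pr.1.2)
  fb3_in : ∀ (L L₁ L₂ : Set (Word S m)) (hL : L ∈ scriptL F m) (h₁ : L₁ ∈ scriptL F m)
    (h₂ : L₂ ∈ scriptL F m) (hne₁ : L₁ ≠ L) (hne₂ : L₂ ≠ L) (pr : AddedV F m),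
    pr.1.1 = L →
    flow L₁ L h₁ hL hne₁ (Sum.inl pr.1.2) (Sum.inr pr) =
      flow L₂ L h₂ hL hne₂ (Sum.inl pr.1.2) (Sum.inr pr)
  fb4_flip : ∀ (t : T) (b : Bool) (h₁ : IsetW F t b m ∈ scriptL F m)
    (h₂ : IsetW F t (!b) m ∈ scriptL F m) (hne : IsetW F t b m ≠ IsetW F t (!b) m)
    (pr qr : AddedV F m), pr.1.1 = IsetW F t b m → qr.1.1 = IsetW F t (!b) m →
    qr.1.2 = (fun i => (ηfam t).hom.toFun (pr.1.2 i)) →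
    flow (IsetW F t b m) (IsetW F t (!b) m) h₁ h₂ hne (Sum.inr pr) (Sum.inl pr.1.2) =
      flow (IsetW F t b m) (IsetW F t (!b) m) h₁ h₂ hne (Sum.inl qr.1.2) (Sum.inr qr)
  fb4_sym : ∀ (t : T) (b : Bool) (h₁ : IsetW F t b m ∈ scriptL F m)
    (h₂ : IsetW F t (!b) m ∈ scriptL F m) (hne : IsetW F t b m ≠ IsetW F t (!b) m)
    (hne' : IsetW F t (!b) m ≠ IsetW F t b m) (pr : AddedV F m),
    pr.1.1 = IsetW F t b m →
    flow (IsetW F t b m) (IsetW F t (!b) m) h₁ h₂ hne (Sum.inr pr) (Sum.inl pr.1.2) =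
      flow (IsetW F t (!b) m) (IsetW F t b m) h₂ h₁ hne' (Sum.inl pr.1.2) (Sum.inr pr)

/-- The `q`-energy of a flow basis: the maximal energy of its members. -/
noncomputable def basisEnergy [Nonempty T] {F : System S T} {ηfam : T → Iso F F} {m : ℕ}
    (q : ℝ) (FB : FlowBasis F ηfam m) : ℝ :=
  sSup {e | ∃ (L₁ L₂ : Set (Word S m)) (h₁ : L₁ ∈ scriptL F m) (h₂ : L₂ ∈ scriptL F m)
    (hne : L₁ ≠ L₂), e = energy q (FB.flow L₁ L₂ h₁ h₂ hne)}

open Classical in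
/-- The twisted flow `T_α(F)` of Proposition "Twist flow". -/
noncomputable def Talpha [Nonempty T] {F : System S T} {m : ℕ} (R : ReflData F)
    (L₁ L₂' : Set (Word S m)) (A : TildeV F m ≃ TildeV F m)
    (Φ : TildeV F m → TildeV F m → ℝ) : TildeV F m → TildeV F m → ℝ := fun x y =>
  if (∃ w, x = Sum.inl w ∧ wordMap R w = w) ∧ (∃ w, y = Sum.inl w ∧ wordMap R w = w) then
    Φ x y
  else if ((∃ w, x = Sum.inl w ∧ w ∈ liftC R m) ∨
        (∃ pr : AddedV F m, x = Sum.inr pr ∧ (pr.1.1 = L₁ ∨ pr.1.1 = L₂'))) ∨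
      ((∃ w, y = Sum.inl w ∧ w ∈ liftC R m) ∨
        (∃ pr : AddedV F m, y = Sum.inr pr ∧ (pr.1.1 = L₁ ∨ pr.1.1 = L₂'))) then
    Φ x y + Φ (A.symm x) (A.symm y)
  else 0

end IGSP
namespace IGSP

/-- The symbol set of the ambient cubical system: `{1,…,L}^d × {1,…,s}` (0-indexed). -/
abbrev CSym (d L s : ℕ) := (Fin d → Fin L) × Fin s

/-- The ambient edge relation of type `t_j`. -/
def ambE {d L s : ℕ} (j : Fin d) (w v : CSym d L s) : Prop :=
  (∀ i, i ≠ j → w.1 i = v.1 i) ∧ (v.1 j : ℕ) = (w.1 j : ℕ) + 1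

/-- The ambient gluing rule of type `t_j`. -/
def ambI {d L s : ℕ} (j : Fin d) (w v : CSym d L s) : Prop :=
  (∀ i, i ≠ j → w.1 i = v.1 i) ∧ (w.1 j : ℕ) = L - 1 ∧ (v.1 j : ℕ) = 0 ∧ w.2 = v.2

/-- A symbol lying on the `j`-axis edge of the cube: all other coordinates extremal
and label `1`. -/
def onAxis {d L s : ℕ} (j : Fin d) (w : CSym d L s) : Prop :=
  (∀ i, i ≠ j → ((w.1 i : ℕ) = 0 ∨ (w.1 i : ℕ) = L - 1)) ∧ (w.2 : ℕ) = 0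

/-- The coordinate reflection `η_j : c_j ↦ L + 1 - c_j`. -/
def etaMap {d L s : ℕ} (j : Fin d) (w : CSym d L s) : CSym d L s :=
  ⟨fun i => if i = j then ⟨L - 1 - (w.1 j : ℕ), by have := (w.1 j).isLt; omega⟩ else w.1 i,
    w.2⟩

/-- The diagonal reflection `α_{j,k}^+` exchanging coordinates `j` and `k`. -/
def swapMap {d L s : ℕ} (j k : Fin d) (w : CSym d L s) : CSym d L s :=
  ⟨fun i => if i = j then w.1 k else if i = k then w.1 j else w.1 i, w.2⟩

/-- The anti-diagonal reflection `α_{j,k}^-`. -/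
def aswapMap {d L s : ℕ} (j k : Fin d) (w : CSym d L s) : CSym d L s :=
  ⟨fun i =>
    if i = j then ⟨L - 1 - (w.1 k : ℕ), by have := (w.1 k).isLt; omega⟩
    else if i = k then ⟨L - 1 - (w.1 j : ℕ), by have := (w.1 j).isLt; omega⟩
    else w.1 i, w.2⟩

/-- A cubical iterated graph system: a sub-system of the ambient system `𝔉(d,L,s)`
satisfying the conditions (C1)–(C4). -/
structure CubicalIGS (d L s : ℕ) where
  hd : 1 ≤ d
  hL : 3 ≤ L
  hs : 1 ≤ s
  Symb : Set (CSym d L s)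
  sys : System (↥Symb) (Fin d)
  edge_amb : ∀ x y : ↥Symb, sys.E x y → ambE (sys.typ x y) x.1 y.1
  glue_amb : ∀ (j : Fin d) (x y : ↥Symb), sys.glue j x y → ambI j x.1 y.1
  C1 : ∀ w : CSym d L s, (∃ j, onAxis j w) → w ∈ Symb
  C2 : ∀ (j : Fin d) (x y : ↥Symb), onAxis j x.1 → onAxis j y.1 → ambE j x.1 y.1 →
    sys.E x y
  C3 : ∀ (j : Fin d) (x y : ↥Symb), onAxis j x.1 → onAxis j y.1 → ambI j x.1 y.1 →
    sys.glue j x y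
  C4_eta : ∀ j : Fin d, ∃ ψ : Iso sys sys,
    ∀ x : ↥Symb, (ψ.hom.toFun x : CSym d L s) = etaMap j x.1
  C4_plus : ∀ j k : Fin d, j ≠ k → ∃ ψ : Iso sys sys,
    ∀ x : ↥Symb, (ψ.hom.toFun x : CSym d L s) = swapMap j k x.1
  C4_minus : ∀ j k : Fin d, j ≠ k → ∃ ψ : Iso sys sys,
    ∀ x : ↥Symb, (ψ.hom.toFun x : CSym d L s) = aswapMap j k x.1

/-- The corner symbol `𝐤`: first coordinate `k`, all other coordinates `1`, label `1`. -/
def cornerSym {d L s : ℕ} (cub : CubicalIGS d L s) (k : Fin L) : ↥cub.Symb :=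
  ⟨⟨fun i => if (i : ℕ) = 0 then k else ⟨0, by have := k.isLt; omega⟩,
      ⟨0, by have := cub.hs; omega⟩⟩, by
    apply cub.C1
    refine ⟨⟨0, cub.hd⟩, fun i hi => ?_, rfl⟩
    have hiv : (i : ℕ) ≠ 0 := fun h => hi (Fin.ext h)
    left
    simp [hiv]⟩

end IGSP
namespace IGSP

/-- The edge relation of the Sierpiński gasket IGS. -/
abbrev gasketE (x y : Fin 3) : Prop :=
  (x = 0 ∧ y = 1) ∨ (x = 1 ∧ y = 2) ∨ (x = 0 ∧ y = 2)

/-- The Sierpiński gasket iterated graph system. -/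
noncomputable def gasket : System (Fin 3) (Fin 3) where
  E := gasketE
  not_both := by decide
  irrefl := by decide
  conn := by
    have hadj : ∀ a b : Fin 3, a ≠ b → gasketE a b ∨ gasketE b a := by decide
    intro x y
    rcases eq_or_ne x y with rfl | h
    · exact Relation.ReflTransGen.refl
    · exact Relation.ReflTransGen.single (hadj x y h)
  typ := fun x y => if x = 0 ∧ y = 1 then 0 else if x = 1 ∧ y = 2 then 1 else 2
  typ_surj := by decide
  glue := fun t x y =>
    (t = 0 ∧ x = 1 ∧ y = 0) ∨ (t = 1 ∧ x = 2 ∧ y = 1) ∨ (t = 2 ∧ x = 2 ∧ y = 0)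
  glue_nonempty := by decide

open Fin.NatCast in
/-- The pentagonal Sierpiński carpet iterated graph system. -/
noncomputable def pentagon : System (Fin 5) (Fin 5) where
  E := fun x y => y = x + 1
  not_both := by decide
  irrefl := by decide
  conn := by
    intro x y
    have key : ∀ (k : ℕ) (z : Fin 5),
        Relation.ReflTransGen (fun a b : Fin 5 => b = a + 1 ∨ a = b + 1) z (z + (k : Fin 5)) := by
      intro k
      induction k with
      | zero => intro z; simpa using Relation.ReflTransGen.refl
      | succ n ih =>
          intro z
          have h : ((n + 1 : ℕ) : Fin 5) = ((n : ℕ) : Fin 5) + 1 := by push_cast; ring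
          rw [h, ← add_assoc]
          exact (ih z).tail (Or.inl rfl)
    have h2 := key ((y - x : Fin 5) : ℕ) x
    rw [Fin.cast_val_eq_self] at h2
    have h3 : x + (y - x) = y := by abel
    rwa [h3] at h2
  typ := fun x _ => x
  typ_surj := fun t => ⟨t, t + 1, rfl, rfl⟩
  glue := fun t x y => (x = t + 1 ∧ y = t) ∨ (x = t + 2 ∧ y = t + 4)
  glue_nonempty := fun t => ⟨t + 1, t, Or.inl ⟨rfl, rfl⟩⟩

/-- The interval iterated graph system `𝔉(1, L)`. -/
noncomputable def intervalSys (L : ℕ) (hL : 3 ≤ L) : System (Fin L) Unit where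
  E x y := (y : ℕ) = (x : ℕ) + 1
  not_both := by intro x y h h'; omega
  irrefl := by intro x h; omega
  conn := by
    have key : ∀ (k : ℕ) (hk : k < L),
        Relation.ReflTransGen (fun a b : Fin L => ((b : ℕ) = (a : ℕ) + 1) ∨ ((a : ℕ) = (b : ℕ) + 1))
          ⟨0, by omega⟩ ⟨k, hk⟩ := by
      intro k
      induction k with
      | zero => intro hk; exact Relation.ReflTransGen.refl
      | succ n ih =>
          intro hk
          exact Relation.ReflTransGen.tail (ih (by omega)) (Or.inl rfl)
    intro x y
    have hsymm : Symmetric fun a b : Fin L => ((b : ℕ) = (a : ℕ) + 1) ∨ ((a : ℕ) = (b : ℕ) + 1) :=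
      fun a b h => h.symm
    have hx := key x.val x.isLt
    have hy := key y.val y.isLt
    simp only [Fin.eta] at hx hy
    exact Relation.ReflTransGen.trans ((@Relation.ReflTransGen.stdSymm _ _ ⟨hsymm⟩).symm _ _ hx) hy
  typ := fun _ _ => ()
  typ_surj := by
    intro t
    refine ⟨⟨0, by omega⟩, ⟨1, by omega⟩, rfl, ?_⟩
    cases t; rfl
  glue := fun _ x y => (x : ℕ) = L - 1 ∧ (y : ℕ) = 0
  glue_nonempty := fun _ => ⟨⟨L - 1, by omega⟩, ⟨0, by omega⟩, rfl, rfl⟩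

variable {S T : Type}

/-- A folding of `G_{k+n}` onto `w̃ · W_n`: a graph mapping into the induced subgraph on
`w̃ · W_n` which fixes `w̃ · W_n` pointwise. -/
def HasFolding [Nonempty T] (F : System S T) (k n : ℕ) (wt : Word S k) : Prop :=
  ∃ f : Word S (k + n) → Word S (k + n),
    (∀ x, ∃ u : Word S n, f x = Fin.append wt u) ∧
    (∀ u : Word S n, f (Fin.append wt u) = Fin.append wt u) ∧
    (∀ x y, adjW F (k + n) x y → f x = f y ∨ adjW F (k + n) (f x) (f y))

end IGSP

namespace IGSP

section Helpers

open List

variable {α β : Type*}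

lemma destutter'_head? {R : α → α → Prop} [DecidableRel R] :
    ∀ (l : List α) (a : α), (l.destutter' R a).head? = some a
  | [], a => rfl
  | b :: l, a => by
    by_cases h : R a b
    · rw [List.destutter'_cons_pos _ h]; rfl
    · rw [List.destutter'_cons_neg _ h]; exact destutter'_head? l a

lemma destutter'_exists_cons {R : α → α → Prop} [DecidableRel R] (l : List α) (a : α) :
    ∃ s, l.destutter' R a = a :: s := by
  have h := destutter'_head? (R := R) l a
  cases hl : l.destutter' R a with
  | nil => rw [hl] at h; simp at h
  | cons x s => rw [hl] at h; simp at h; exact ⟨s, by rw [h]⟩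

lemma destutter'_getLast? {R : α → α → Prop} [DecidableRel R]
    (hR : ∀ a b, ¬ R a b → a = b) :
    ∀ (l : List α) (a : α), (l.destutter' R a).getLast? = (a :: l).getLast?
  | [], a => rfl
  | b :: l, a => by
    by_cases h : R a b
    · rw [List.destutter'_cons_pos _ h, List.getLast?_cons_cons]
      obtain ⟨s, hs⟩ := destutter'_exists_cons (R := R) l b
      rw [hs, List.getLast?_cons_cons, ← hs, destutter'_getLast? hR l b]
    · rw [List.destutter'_cons_neg _ h, destutter'_getLast? hR l a,
        List.getLast?_cons_cons]
      cases l with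
      | nil => simp [hR a b h]
      | cons c t => simp [List.getLast?_cons_cons]

lemma destutter_head? {R : α → α → Prop} [DecidableRel R] (l : List α) :
    (l.destutter R).head? = l.head? := by
  cases l with
  | nil => rfl
  | cons a t => rw [List.destutter_cons', destutter'_head?]; rfl

lemma destutter_getLast? {R : α → α → Prop} [DecidableRel R]
    (hR : ∀ a b, ¬ R a b → a = b) (l : List α) :
    (l.destutter R).getLast? = l.getLast? := by
  cases l with
  | nil => rfl
  | cons a t => rw [List.destutter_cons', destutter'_getLast? hR]

lemma destutter'_map_destutter' {R : α → α → Prop} {Q : β → β → Prop}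
    [DecidableRel R] [DecidableRel Q]
    (hα : ∀ a b : α, ¬ R a b → a = b) (hβ : ∀ b : β, ¬ Q b b) (f : α → β) :
    ∀ (l : List α) (a : α) (c : β),
      ((l.destutter' R a).map f).destutter' Q c = (((a :: l).map f).destutter' Q c)
  | [], a, c => rfl
  | x :: t, a, c => by
    by_cases h : R a x
    · rw [List.destutter'_cons_pos _ h]
      show ((f a :: (t.destutter' R x).map f).destutter' Q c) = _
      by_cases hq : Q c (f a)
      · rw [List.destutter'_cons_pos _ hq,
          destutter'_map_destutter' hα hβ f t x (f a)]
        show _ = ((f a :: f x :: t.map f).destutter' Q c)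
        rw [List.destutter'_cons_pos _ hq]
        rfl
      · rw [List.destutter'_cons_neg _ hq,
          destutter'_map_destutter' hα hβ f t x c]
        show _ = ((f a :: f x :: t.map f).destutter' Q c)
        rw [List.destutter'_cons_neg _ hq]
        rfl
    · have hax : a = x := hα a x h
      rw [List.destutter'_cons_neg _ h,
        destutter'_map_destutter' hα hβ f t a c]
      show ((f a :: t.map f).destutter' Q c) = ((f a :: f x :: t.map f).destutter' Q c)
      subst hax
      by_cases hq : Q c (f a)
      · rw [List.destutter'_cons_pos _ hq, List.destutter'_cons_pos _ hq,
          List.destutter'_cons_neg _ (hβ (f a))]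
      · rw [List.destutter'_cons_neg _ hq, List.destutter'_cons_neg _ hq,
          List.destutter'_cons_neg _ hq]

lemma destutter_map_destutter {R : α → α → Prop} {Q : β → β → Prop}
    [DecidableRel R] [DecidableRel Q]
    (hα : ∀ a b : α, ¬ R a b → a = b) (hβ : ∀ b : β, ¬ Q b b) (f : α → β)
    (l : List α) :
    ((l.destutter R).map f).destutter Q = (l.map f).destutter Q := by
  cases l with
  | nil => rfl
  | cons a t =>
    rw [List.destutter_cons']
    obtain ⟨s, hs⟩ := destutter'_exists_cons (R := R) t a
    have h1 : ((t.destutter' R a).map f).destutter Q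
        = ((t.destutter' R a).map f).destutter' Q (f a) := by
      rw [hs]
      show (f a :: s.map f).destutter Q = (f a :: s.map f).destutter' Q (f a)
      rw [List.destutter_cons', List.destutter'_cons_neg _ (hβ (f a))]
    rw [h1, destutter'_map_destutter' hα hβ f t a (f a)]
    show ((f a :: t.map f).destutter' Q (f a)) = ((f a :: t.map f).destutter Q)
    rw [List.destutter'_cons_neg _ (hβ (f a)), List.destutter_cons']

lemma chain'_destutter' {R : α → α → Prop} [DecidableRel R] {P : α → α → Prop}
    (hα : ∀ a b, ¬ R a b → a = b) (hR2 : ∀ a b, R a b → a ≠ b) :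
    ∀ (l : List α) (a : α), Chain' (fun x y => x = y ∨ P x y) (a :: l) →
      Chain' P (l.destutter' R a)
  | [], a, _ => List.isChain_singleton a
  | x :: t, a, hc => by
    obtain ⟨h1, h2⟩ := List.isChain_cons_cons.mp hc
    by_cases h : R a x
    · rw [List.destutter'_cons_pos _ h]
      rw [List.Chain', List.isChain_cons]
      refine ⟨?_, chain'_destutter' hα hR2 t x h2⟩
      intro y hy
      rw [destutter'_head? t x] at hy
      cases hy
      rcases h1 with h1 | h1
      · exact absurd h1 (hR2 a x h)
      · exact h1
    · have hax : a = x := hα a x h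
      rw [List.destutter'_cons_neg _ h]
      exact chain'_destutter' hα hR2 t a (hax ▸ h2)

lemma chain'_destutter {R : α → α → Prop} [DecidableRel R] {P : α → α → Prop}
    (hα : ∀ a b, ¬ R a b → a = b) (hR2 : ∀ a b, R a b → a ≠ b) {l : List α}
    (hc : Chain' (fun x y => x = y ∨ P x y) l) : Chain' P (l.destutter R) := by
  cases l with
  | nil => exact List.isChain_nil
  | cons a t => rw [List.destutter_cons']; exact chain'_destutter' hα hR2 t a hc

lemma chain'_and {P Q : α → α → Prop} {l : List α} (h1 : Chain' P l)
    (h2 : Chain' Q l) : Chain' (fun a b => P a b ∧ Q a b) l := by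
  simp only [List.Chain', List.isChain_iff_getElem] at *
  exact fun i h => ⟨h1 i h, h2 i h⟩

lemma walk_of_chain {V : Type} {G : SimpleGraph V} :
    ∀ (l : List V) (x y : V), List.Chain' G.Adj (x :: l) →
      (x :: l).getLast? = some y → ∃ p : G.Walk x y, p.length = l.length
  | [], x, y, _, hl => by
    simp only [List.getLast?_singleton, Option.some.injEq] at hl
    subst hl; exact ⟨SimpleGraph.Walk.nil, rfl⟩
  | z :: t, x, y, hc, hl => by
    rw [List.getLast?_cons_cons] at hl
    obtain ⟨hadj, hc'⟩ := List.isChain_cons_cons.mp hc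
    obtain ⟨p, hp⟩ := walk_of_chain t z y hc' hl
    exact ⟨SimpleGraph.Walk.cons hadj p, by simp [hp]⟩

end Helpers

section IGSHelpers

open List

variable {S T : Type} [Nonempty T] (F : System S T)

lemma edge_zero (w v : Word S 0) : ¬ edge F 0 w v := by
  simp [edge, replData]

lemma edge_one {w v : Word S 1} : edge F 1 w v ↔ F.E (w 0) (v 0) := by
  simp [edge, replData]

lemma etyp_one (w v : Word S 1) : etyp F 1 w v = F.typ (w 0) (v 0) := by
  simp [etyp, replData]

lemma edge_succ_succ {L : ℕ} {w v : Word S (L + 2)} :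
    edge F (L + 2) w v ↔
      (Fin.init w = Fin.init v ∧ F.E (w (Fin.last (L + 1))) (v (Fin.last (L + 1)))) ∨
      (edge F (L + 1) (Fin.init w) (Fin.init v) ∧
        F.glue (etyp F (L + 1) (Fin.init w) (Fin.init v))
          (w (Fin.last (L + 1))) (v (Fin.last (L + 1)))) := by
  simp [edge, etyp, replData]

open Classical in
lemma etyp_succ_succ {L : ℕ} (w v : Word S (L + 2)) :
    etyp F (L + 2) w v =
      if Fin.init w = Fin.init v then F.typ (w (Fin.last (L + 1))) (v (Fin.last (L + 1)))
      else etyp F (L + 1) (Fin.init w) (Fin.init v) := by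
  simp [etyp, replData]

lemma edge_ne : ∀ (L : ℕ) {w v : Word S L}, edge F L w v → w ≠ v
  | 0, w, v, h => absurd h (edge_zero F w v)
  | 1, w, v, h => by
    rw [edge_one] at h
    rintro rfl
    exact F.irrefl _ h
  | (L + 2), w, v, h => by
    rw [edge_succ_succ] at h
    rintro rfl
    rcases h with ⟨_, h⟩ | ⟨h, _⟩
    · exact F.irrefl _ h
    · exact edge_ne (L + 1) h rfl

lemma adjW_ne {L : ℕ} {w v : Word S L} (h : adjW F L w v) : w ≠ v := by
  rcases h with h | h
  · exact edge_ne F L h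
  · exact (edge_ne F L h).symm

lemma edge_prefix : ∀ (L k : ℕ) (h : k ≤ L) {w v : Word S L}, edge F L w v →
    (fun i : Fin k => w (Fin.castLE h i)) = (fun i => v (Fin.castLE h i)) ∨
      edge F k (fun i => w (Fin.castLE h i)) (fun i => v (Fin.castLE h i))
  | 0, k, h, w, v, he => absurd he (edge_zero F w v)
  | 1, k, h, w, v, he => by
    match k with
    | 0 => exact Or.inl (funext fun i => i.elim0)
    | 1 =>
      right
      rw [edge_one] at he ⊢
      exact he
  | (L + 2), k, h, w, v, he => by
    rcases Nat.lt_or_ge k (L + 2) with hk | hk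
    · have hk' : k ≤ L + 1 := by omega
      rw [edge_succ_succ] at he
      have key : ∀ u : Word S (L + 2),
          (fun i : Fin k => u (Fin.castLE h i))
            = fun i : Fin k => Fin.init u (Fin.castLE hk' i) := fun _ => rfl
      rcases he with ⟨hi, _⟩ | ⟨hi, _⟩
      · left; rw [key w, key v, hi]
      · rcases edge_prefix (L + 1) k hk' hi with h1 | h1
        · left; rw [key w, key v]; exact h1
        · right; rw [key w, key v]; exact h1
    · have hkk : k = L + 2 := by omega
      subst hkk
      exact Or.inr he

lemma adjW_prefix {L k : ℕ} (h : k ≤ L) {w v : Word S L} (ha : adjW F L w v) :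
    (fun i : Fin k => w (Fin.castLE h i)) = (fun i => v (Fin.castLE h i)) ∨
      adjW F k (fun i => w (Fin.castLE h i)) (fun i => v (Fin.castLE h i)) := by
  rcases ha with he | he
  · rcases edge_prefix F L k h he with h1 | h1
    · exact Or.inl h1
    · exact Or.inr (Or.inl h1)
  · rcases edge_prefix F L k h he with h1 | h1
    · exact Or.inl h1.symm
    · exact Or.inr (Or.inr h1)

open Classical in
lemma proj_eq {k L : ℕ} (h : k ≤ L) (θ : List (Word S L)) :
    proj h θ = (θ.map fun w => fun i => w (Fin.castLE h i)).destutter (· ≠ ·) := rfl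

open Classical in
lemma proj_ne_nil {k L : ℕ} (h : k ≤ L) {θ : List (Word S L)} (hθ : θ ≠ []) :
    proj h θ ≠ [] := by
  rw [proj_eq, Ne, List.destutter_eq_nil, List.map_eq_nil_iff]
  exact hθ

open Classical in
lemma isPath_proj {k L : ℕ} (h : k ≤ L) {θ : List (Word S L)}
    (hp : IsPath F L θ) : IsPath F k (proj h θ) := by
  refine ⟨proj_ne_nil h hp.1, ?_⟩
  rw [proj_eq]
  apply chain'_destutter (fun a b hab => not_not.mp hab) (fun a b hab => hab)
  rw [List.Chain', List.isChain_map]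
  exact hp.2.imp fun {a b} hab => adjW_prefix F h hab

open Classical in
lemma proj_head? {k L : ℕ} (h : k ≤ L) (θ : List (Word S L)) :
    (proj h θ).head? = θ.head?.map fun w => fun i => w (Fin.castLE h i) := by
  rw [proj_eq, destutter_head?, List.head?_map]

open Classical in
lemma proj_getLast? {k L : ℕ} (h : k ≤ L) (θ : List (Word S L)) :
    (proj h θ).getLast? = θ.getLast?.map fun w => fun i => w (Fin.castLE h i) := by
  rw [proj_eq, destutter_getLast? (fun a b hab => not_not.mp hab), List.getLast?_map]

open Classical in
lemma proj_length_le {k L : ℕ} (h : k ≤ L) (θ : List (Word S L)) :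
    (proj h θ).length ≤ θ.length := by
  rw [proj_eq]
  exact le_trans (List.Sublist.length_le (List.destutter_sublist _ _))
    (le_of_eq (List.length_map _))

/-- Padding a word of length `m+1` to length `k` by repeating its last letter. -/
def padTo (m k : ℕ) (w : Word S (m + 1)) : Word S k :=
  fun i => if h : (i : ℕ) < m + 1 then w ⟨i, h⟩ else w (Fin.last m)

lemma padTo_self {m : ℕ} (w : Word S (m + 1)) : padTo m (m + 1) w = w := by
  funext i
  rw [padTo, dif_pos i.isLt]

lemma padTo_init {m n : ℕ} (w : Word S (m + 1)) :
    Fin.init (padTo m (n + 2) w) = padTo m (n + 1) w := rfl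

lemma padTo_last {m n : ℕ} (hn : m ≤ n) (w : Word S (m + 1)) :
    padTo m (n + 2) w (Fin.last (n + 1)) = w (Fin.last m) := by
  rw [padTo, dif_neg]
  simp only [Fin.val_last]
  omega

lemma padTo_castLE {m k n : ℕ} (hk : m ≤ k) (h : k + 1 ≤ n + 1) (w : Word S (m + 1)) :
    (fun i : Fin (k + 1) => padTo m (n + 1) w (Fin.castLE h i)) = padTo m (k + 1) w := rfl

lemma padTo_pre {m k n : ℕ} (hk : k ≤ m) (h : k + 1 ≤ n + 1) (hmn : m ≤ n)
    (w : Word S (m + 1)) :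
    (fun i : Fin (k + 1) => padTo m (n + 1) w (Fin.castLE h i))
      = fun i : Fin (k + 1) => w (Fin.castLE (Nat.succ_le_succ hk) i) := by
  funext i
  exact dif_pos (lt_of_lt_of_le i.isLt (Nat.succ_le_succ hk))

lemma padTo_injective {m n : ℕ} (hn : m ≤ n) {w v : Word S (m + 1)}
    (h : padTo m (n + 1) w = padTo m (n + 1) v) : w = v := by
  funext i
  have e1 : padTo m (n + 1) w (Fin.castLE (Nat.succ_le_succ hn) i) = w i := dif_pos i.isLt
  have e2 : padTo m (n + 1) v (Fin.castLE (Nat.succ_le_succ hn) i) = v i := dif_pos i.isLt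
  rw [← e1, ← e2, h]

lemma glue_of_edge_ne_init {m : ℕ} {w v : Word S (m + 1)} (he : edge F (m + 1) w v)
    (hi : Fin.init w ≠ Fin.init v) :
    F.glue (etyp F (m + 1) w v) (w (Fin.last m)) (v (Fin.last m)) := by
  match m with
  | 0 => exact absurd (funext fun i => i.elim0) hi
  | (L + 1) =>
    rw [edge_succ_succ] at he
    rcases he with ⟨h1, _⟩ | ⟨h1, h2⟩
    · exact absurd h1 hi
    · rw [etyp_succ_succ, if_neg hi]
      exact h2

lemma pad_edge {m : ℕ} {w v : Word S (m + 1)} (he : edge F (m + 1) w v)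
    (hi : Fin.init w ≠ Fin.init v) :
    ∀ n, m ≤ n → edge F (n + 1) (padTo m (n + 1) w) (padTo m (n + 1) v) ∧
      etyp F (n + 1) (padTo m (n + 1) w) (padTo m (n + 1) v) = etyp F (m + 1) w v := by
  intro n hn
  induction n, hn using Nat.le_induction with
  | base => rw [padTo_self, padTo_self]; exact ⟨he, rfl⟩
  | succ n hn ih =>
    have hne : Fin.init (padTo m (n + 2) w) ≠ Fin.init (padTo m (n + 2) v) := by
      rw [padTo_init, padTo_init]
      exact edge_ne F (n + 1) ih.1
    constructor
    · show edge F (n + 2) (padTo m (n + 2) w) (padTo m (n + 2) v)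
      rw [edge_succ_succ]
      refine Or.inr ⟨?_, ?_⟩
      · rw [padTo_init, padTo_init]; exact ih.1
      · rw [padTo_init, padTo_init, ih.2, padTo_last hn, padTo_last hn]
        exact glue_of_edge_ne_init F he hi
    · show etyp F (n + 2) (padTo m (n + 2) w) (padTo m (n + 2) v) = etyp F (m + 1) w v
      rw [etyp_succ_succ, if_neg hne, padTo_init, padTo_init, ih.2]

lemma ncRel_iff_init {m : ℕ} {w v : Word S (m + 1)} :
    ncRel w v ↔ Fin.init w ≠ Fin.init v := by
  constructor
  · rintro ⟨j, hj, hne⟩ h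
    apply hne
    have hj' : (j : ℕ) < m := by omega
    have := congrFun h ⟨(j : ℕ), hj'⟩
    exact this
  · intro h
    have hex : ∃ j : Fin m, Fin.init w j ≠ Fin.init v j := Function.ne_iff.mp h
    obtain ⟨j, hj⟩ := hex
    have hjm := j.isLt
    refine ⟨⟨(j : ℕ), by omega⟩, ?_, hj⟩
    show (j : ℕ) + 1 < m + 1
    omega

end IGSHelpers

section Constr

open List

variable {S T : Type} [Nonempty T] (F : System S T)

open Classical in
lemma constr {m : ℕ} {θ : List (Word S (m + 1))} (hp : IsPath F (m + 1) θ)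
    (hnc : NonCollapsing θ) :
    ∃ Θ : (n : ℕ) → List (Word S (n + 1)),
      Θ m = θ ∧ (∀ n, IsPath F (n + 1) (Θ n)) ∧
      (∀ (k n : ℕ) (h : k ≤ n), proj (Nat.succ_le_succ h) (Θ n) = Θ k) ∧
      (∀ n, (Θ n).length ≤ θ.length) := by
  classical
  -- the combined chain of adjacency and prefix-difference
  have hchain : Chain' (fun w v => adjW F (m + 1) w v ∧ Fin.init w ≠ Fin.init v) θ :=
    chain'_and hp.2 (hnc.imp fun {a b} hab => ncRel_iff_init.mp hab)
  have hpair : ∀ {a b : Word S (m + 1)},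
      (adjW F (m + 1) a b ∧ Fin.init a ≠ Fin.init b) → ∀ n, m ≤ n →
      adjW F (n + 1) (padTo m (n + 1) a) (padTo m (n + 1) b) := by
    rintro a b ⟨hab, hi⟩ n hn
    rcases hab with he | he
    · exact Or.inl (pad_edge F he hi n hn).1
    · exact Or.inr (pad_edge F he (Ne.symm hi) n hn).1
  have hpairne : ∀ {a b : Word S (m + 1)},
      (adjW F (m + 1) a b ∧ Fin.init a ≠ Fin.init b) → ∀ n, m ≤ n →
      padTo m (n + 1) a ≠ padTo m (n + 1) b := by
    intro a b hab n hn
    exact adjW_ne F (hpair hab n hn)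
  refine ⟨fun n => if h : m ≤ n then θ.map (padTo m (n + 1))
    else proj (Nat.succ_le_succ (le_of_not_ge h)) θ, ?_, ?_, ?_, ?_⟩
  · beta_reduce
    rw [dif_pos (le_refl m)]
    have hfun : padTo m (m + 1) = fun w : Word S (m + 1) => w := funext padTo_self
    rw [hfun]
    exact List.map_id' θ
  · intro n
    by_cases h : m ≤ n
    · beta_reduce
      rw [dif_pos h]
      refine ⟨by simp [hp.1], ?_⟩
      rw [List.Chain', List.isChain_map]
      exact hchain.imp fun {a b} hab => hpair hab n h
    · beta_reduce
      rw [dif_neg h]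
      exact isPath_proj F _ hp
  · intro k n h
    by_cases hk : m ≤ k
    · have hn : m ≤ n := le_trans hk h
      beta_reduce
      rw [dif_pos hk, dif_pos hn, proj_eq, List.map_map]
      have hfun : ((fun w : Word S (n + 1) => fun i : Fin (k + 1) =>
          w (Fin.castLE (Nat.succ_le_succ h) i)) ∘ padTo m (n + 1))
          = padTo m (k + 1) :=
        funext fun w => padTo_castLE hk (Nat.succ_le_succ h) w
      rw [hfun]
      apply List.destutter_of_isChain
      rw [List.isChain_map]
      exact hchain.imp fun {a b} hab => hpairne hab k hk
    · by_cases hn : m ≤ n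
      · beta_reduce
        rw [dif_pos hn, dif_neg hk, proj_eq, List.map_map, proj_eq]
        have hfun : ((fun w : Word S (n + 1) => fun i : Fin (k + 1) =>
            w (Fin.castLE (Nat.succ_le_succ h) i)) ∘ padTo m (n + 1))
            = fun w : Word S (m + 1) => fun i : Fin (k + 1) =>
              w (Fin.castLE (Nat.succ_le_succ (le_of_not_ge hk)) i) :=
          funext fun w => padTo_pre (le_of_not_ge hk) (Nat.succ_le_succ h) hn w
        rw [hfun]
      · beta_reduce
        rw [dif_neg hk, dif_neg hn, proj_eq, proj_eq, proj_eq,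
          destutter_map_destutter (fun a b hab => not_not.mp hab)
            (fun b hb => hb rfl) _ _, List.map_map]
        rfl
  · intro n
    by_cases h : m ≤ n
    · beta_reduce
      rw [dif_pos h, List.length_map]
    · beta_reduce
      rw [dif_neg h]
      exact proj_length_le _ θ

/-- Part (i), non-collapsing case. -/
lemma intersection_of_nonCollapsing {m : ℕ} {θ : List (Word S (m + 1))}
    (hp : IsPath F (m + 1) θ) (hnc : NonCollapsing θ) :
    IsIntersectionPath F m θ := by
  obtain ⟨Θ, h1, h2, h3, h4⟩ := constr F hp hnc
  exact ⟨hp, Θ, h1, h2, h3, θ.length, h4⟩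

/-- Part (i), paths with at most two vertices. -/
lemma intersection_of_short {m : ℕ} {θ : List (Word S (m + 1))}
    (hp : IsPath F (m + 1) θ) (hlen : θ.length ≤ 2) :
    IsIntersectionPath F m θ := by
  classical
  match θ, hp, hlen with
  | [], hp, _ => exact absurd rfl hp.1
  | [w], hp, _ => exact intersection_of_nonCollapsing F hp (List.isChain_singleton w)
  | [w, v], hp, _ =>
    have hadj : adjW F (m + 1) w v := List.isChain_pair.mp hp.2
    by_cases hnc : ncRel w v
    · exact intersection_of_nonCollapsing F hp (List.isChain_pair.mpr hnc)
    · -- lift one level using a gluing pair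
      have hwv : w ≠ v := adjW_ne F hadj
      have hsnoc : ∀ {a b : S} {w' v' : Word S (m + 1)}, edge F (m + 1) w' v' →
          F.glue (etyp F (m + 1) w' v') a b →
          edge F (m + 2) (Fin.snoc w' a) (Fin.snoc v' b) := by
        intro a b w' v' he hg
        rw [edge_succ_succ]
        refine Or.inr ⟨?_, ?_⟩
        · rw [Fin.init_snoc, Fin.init_snoc]; exact he
        · rw [Fin.init_snoc, Fin.init_snoc, Fin.snoc_last, Fin.snoc_last]; exact hg
      have key : ∃ a b : S, adjW F (m + 2) (Fin.snoc w a) (Fin.snoc v b) := by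
        rcases hadj with he | he
        · obtain ⟨a, b, hg⟩ := F.glue_nonempty (etyp F (m + 1) w v)
          exact ⟨a, b, Or.inl (hsnoc he hg)⟩
        · obtain ⟨a, b, hg⟩ := F.glue_nonempty (etyp F (m + 1) v w)
          exact ⟨b, a, Or.inr (hsnoc he hg)⟩
      obtain ⟨a, b, hadj'⟩ := key
      set w' : Word S (m + 2) := Fin.snoc w a with hw'
      set v' : Word S (m + 2) := Fin.snoc v b with hv'
      have hp' : IsPath F (m + 2) [w', v'] :=
        ⟨List.cons_ne_nil _ _, List.isChain_pair.mpr hadj'⟩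
      have hnc' : NonCollapsing [w', v'] := by
        refine List.isChain_pair.mpr ?_
        obtain ⟨j, hj⟩ := Function.ne_iff.mp hwv
        have hjm := j.isLt
        refine ⟨⟨(j : ℕ), by omega⟩, ?_, ?_⟩
        · show (j : ℕ) + 1 < m + 2
          omega
        · show w' (Fin.castSucc j) ≠ v' (Fin.castSucc j)
          rw [hw', hv', Fin.snoc_castSucc, Fin.snoc_castSucc]
          exact hj
      obtain ⟨Θ, h1, h2, h3, h4⟩ := constr F (m := m + 1) hp' hnc'
      have hm : Θ m = [w, v] := by
        have := h3 m (m + 1) (Nat.le_succ m)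
        rw [h1] at this
        rw [← this, proj_eq]
        have hpre : ∀ (u : Word S (m + 1)) (c : S),
            (fun i : Fin (m + 1) =>
              (Fin.snoc u c : Word S (m + 2))
                (Fin.castLE (Nat.succ_le_succ (Nat.le_succ m)) i)) = u := by
          intro u c
          funext i
          show (Fin.snoc u c : Word S (m + 2)) (Fin.castSucc i) = u i
          rw [Fin.snoc_castSucc]
        show (([w', v'].map fun u => fun i : Fin (m + 1) =>
          u (Fin.castLE (Nat.succ_le_succ (Nat.le_succ m)) i)).destutter (· ≠ ·)) = [w, v]
        rw [List.map_cons, List.map_cons, List.map_nil, hw', hv', hpre w a, hpre v b,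
          List.destutter_pair, if_pos hwv]
      refine ⟨hp, Θ, hm, h2, h3, 2, fun n => le_trans (h4 n) (by simp)⟩

/-- Part (ii) as a standalone lemma. -/
lemma eventually_nonCollapsing (Θ : (n : ℕ) → List (Word S (n + 1)))
    (hpaths : ∀ n, IsPath F (n + 1) (Θ n))
    (hproj : ∀ (k n : ℕ) (h : k ≤ n), proj (Nat.succ_le_succ h) (Θ n) = Θ k)
    (hC : ∃ C : ℕ, ∀ n, (Θ n).length ≤ C) :
    ∃ N : ℕ, ∀ n ≥ N, NonCollapsing (Θ n) := by
  classical
  obtain ⟨C, hC⟩ := hC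
  have mono : ∀ k n, k ≤ n → (Θ k).length ≤ (Θ n).length := by
    intro k n h
    rw [← hproj k n h]
    exact proj_length_le _ (Θ n)
  have hbdd : BddAbove (Set.range fun n => (Θ n).length) := by
    refine ⟨C, ?_⟩
    rintro x ⟨n, rfl⟩
    exact hC n
  obtain ⟨N, hN⟩ := Nat.sSup_mem (Set.range_nonempty fun n => (Θ n).length) hbdd
  have hN' : (Θ N).length = sSup (Set.range fun n => (Θ n).length) := hN
  have hmax : ∀ n, (Θ n).length ≤ (Θ N).length := by
    intro n
    rw [hN']
    exact le_csSup hbdd ⟨n, rfl⟩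
  refine ⟨N + 1, ?_⟩
  intro n hn
  obtain ⟨n', rfl⟩ : ∃ n', n = n' + 1 := ⟨n - 1, by omega⟩
  have hn' : N ≤ n' := by omega
  -- lengths are all equal from N on
  have hlen : (Θ n').length = ((Θ (n' + 1)).map fun w => fun i : Fin (n' + 1) =>
      w (Fin.castLE (Nat.succ_le_succ (Nat.le_succ n')) i)).length := by
    rw [List.length_map]
    exact Nat.le_antisymm (mono n' (n' + 1) (Nat.le_succ n'))
      (le_trans (hmax (n' + 1)) (mono N n' hn'))
  have hdst := hproj n' (n' + 1) (Nat.le_succ n')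
  rw [proj_eq] at hdst
  have hself : ((Θ (n' + 1)).map fun w => fun i : Fin (n' + 1) =>
      w (Fin.castLE (Nat.succ_le_succ (Nat.le_succ n')) i)).Chain' (· ≠ ·) := by
    have heq : ((Θ (n' + 1)).map fun w => fun i : Fin (n' + 1) =>
        w (Fin.castLE (Nat.succ_le_succ (Nat.le_succ n')) i)).destutter (· ≠ ·)
        = (Θ (n' + 1)).map fun w => fun i : Fin (n' + 1) =>
          w (Fin.castLE (Nat.succ_le_succ (Nat.le_succ n')) i) :=
      List.Sublist.eq_of_length (List.destutter_sublist _ _) (by rw [hdst, ← hlen])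
    rw [← heq]
    exact List.isChain_destutter _ _
  rw [List.Chain', List.isChain_map] at hself
  refine hself.imp ?_
  intro w v hne
  obtain ⟨i, hi⟩ := Function.ne_iff.mp hne
  have him := i.isLt
  exact ⟨⟨(i : ℕ), Nat.lt_succ_of_lt him⟩, Nat.succ_lt_succ him, hi⟩

end Constr

section DistHelpers

open List

variable {S T : Type} [Nonempty T] (F : System S T)

lemma chain'_replAdj {L : ℕ} {θ : List (Word S L)} (hc : List.Chain' (adjW F L) θ)
    (hne : List.Chain' (· ≠ ·) θ) : List.Chain' (replGraph F L).Adj θ :=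
  (chain'_and hne hc).imp fun _ _ h => h

lemma dist_head_last_of_intersection {D m : ℕ}
    (hD : ∀ (n : ℕ) (θ : List (Word S (n + 1))), IsPath F (n + 1) θ → NonCollapsing θ →
        ∀ x ∈ θ, ∀ y ∈ θ, (replGraph F (n + 1)).dist x y ≤ D)
    {θ : List (Word S (m + 1))} (hIP : IsIntersectionPath F m θ)
    {w v : Word S (m + 1)} (hw : θ.head? = some w) (hv : θ.getLast? = some v) :
    ∃ p : (replGraph F (m + 1)).Walk w v, p.length ≤ D := by
  classical
  obtain ⟨hpθ, Θ, hΘm, hpaths, hproj, C, hC⟩ := hIP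
  obtain ⟨N, hN⟩ := eventually_nonCollapsing F Θ hpaths hproj ⟨C, hC⟩
  set n := N + m with hn
  have hNn : N ≤ n := Nat.le_add_right N m
  have hmn : m ≤ n := Nat.le_add_left m N
  have hncn : NonCollapsing (Θ n) := hN n hNn
  obtain ⟨x, t, hxt⟩ := List.exists_cons_of_ne_nil (hpaths n).1
  have hne : Θ n ≠ [] := (hpaths n).1
  have hheadn : (Θ n).head? = some x := by rw [hxt]; rfl
  have hlastn : (Θ n).getLast? = some ((Θ n).getLast hne) :=
    List.getLast?_eq_getLast hne
  set y := (Θ n).getLast hne with hy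
  have hprojmn := hproj m n hmn
  rw [hΘm] at hprojmn
  -- identify w and v as prefixes of x and y
  have hwx : w = fun i : Fin (m + 1) => x (Fin.castLE (Nat.succ_le_succ hmn) i) := by
    have := proj_head? (Nat.succ_le_succ hmn) (Θ n)
    rw [hprojmn, hw, hheadn] at this
    exact Option.some.inj this
  have hvy : v = fun i : Fin (m + 1) => y (Fin.castLE (Nat.succ_le_succ hmn) i) := by
    have := proj_getLast? (Nat.succ_le_succ hmn) (Θ n)
    rw [hprojmn, hv, hlastn] at this
    exact Option.some.inj this
  -- x and y are joined by a walk in `G_{n+1}`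
  have hchainAdj : List.Chain' (replGraph F (n + 1)).Adj (Θ n) :=
    chain'_replAdj F (hpaths n).2 ((hpaths n).2.imp fun _ _ h => adjW_ne F h)
  have hreach : (replGraph F (n + 1)).Reachable x y := by
    obtain ⟨q, _⟩ := walk_of_chain t x y (hxt ▸ hchainAdj) (by rw [← hxt, hlastn])
    exact ⟨q⟩
  have hxy : (replGraph F (n + 1)).dist x y ≤ D := by
    refine hD n (Θ n) (hpaths n) hncn x ?_ y ?_
    · exact List.mem_of_mem_head? (by rw [hheadn]; rfl)
    · exact List.mem_of_mem_getLast? (by rw [hlastn]; rfl)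
  obtain ⟨p', hp'len⟩ := hreach.exists_walk_length_eq_dist
  -- project the geodesic down to level `m+1`
  set ls := p'.support with hls
  have hlsne : ls ≠ [] := p'.support_ne_nil
  have hlschain : List.Chain' (adjW F (n + 1)) ls :=
    p'.isChain_adj_support.imp fun _ _ h => h.2
  have hlshead : ls.head? = some x := by
    rw [hls, p'.support_eq_cons]; rfl
  have hlslast : ls.getLast? = some y := by
    rw [List.getLast?_eq_getLast hlsne]
    exact congrArg some p'.getLast_support
  set lsp := proj (Nat.succ_le_succ hmn) ls with hlsp
  have hlspPath : IsPath F (m + 1) lsp :=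
    isPath_proj F (Nat.succ_le_succ hmn) ⟨hlsne, hlschain⟩
  have hlspne : List.Chain' (· ≠ ·) lsp := by
    rw [hlsp, proj_eq]
    exact List.isChain_destutter _ _
  have hlspchain : List.Chain' (replGraph F (m + 1)).Adj lsp :=
    chain'_replAdj F hlspPath.2 hlspne
  have hlsphead : lsp.head? = some w := by
    rw [hlsp, proj_head?, hlshead, hwx]; rfl
  have hlsplast : lsp.getLast? = some v := by
    rw [hlsp, proj_getLast?, hlslast, hvy]; rfl
  obtain ⟨t', ht'⟩ : ∃ t', lsp = w :: t' := by
    obtain ⟨a, t', hat⟩ := List.exists_cons_of_ne_nil hlspPath.1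
    refine ⟨t', ?_⟩
    rw [hat]
    rw [hat] at hlsphead
    have : a = w := Option.some.inj hlsphead
    rw [this]
  obtain ⟨p, hplen⟩ := walk_of_chain t' w v (ht' ▸ hlspchain) (ht' ▸ hlsplast)
  refine ⟨p, ?_⟩
  have hlb : lsp.length ≤ ls.length := proj_length_le _ ls
  have hlslen : ls.length = p'.length + 1 := p'.length_support
  have hlsplen : lsp.length = t'.length + 1 := by rw [ht']; rfl
  omega

end DistHelpers

/-- (i) Paths with at most two vertices and non-collapsing paths are
intersection paths; (ii) the witnessing sequence of an intersection path is eventually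
non-collapsing; (iii) bounded geometry is equivalent to a uniform diameter bound on
non-collapsing paths. -/
theorem statement7 {S T : Type} [Fintype S] [Nonempty T] (F : System S T) (hGR : GR F) :
    (∀ (m : ℕ) (θ : List (Word S (m + 1))), IsPath F (m + 1) θ → θ.length ≤ 2 →
      IsIntersectionPath F m θ) ∧
    (∀ (m : ℕ) (θ : List (Word S (m + 1))), IsPath F (m + 1) θ → NonCollapsing θ →
      IsIntersectionPath F m θ) ∧
    (∀ (m : ℕ) (θ : List (Word S (m + 1))) (Θ : (n : ℕ) → List (Word S (n + 1))),
      Θ m = θ → (∀ n, IsPath F (n + 1) (Θ n)) →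
      (∀ (k n : ℕ) (h : k ≤ n), proj (Nat.succ_le_succ h) (Θ n) = Θ k) →
      (∃ C : ℕ, ∀ n, (Θ n).length ≤ C) →
      ∃ N : ℕ, ∀ n ≥ N, NonCollapsing (Θ n)) ∧
    (BoundedGeometry F ↔
      ∃ D : ℕ, ∀ (m : ℕ) (θ : List (Word S (m + 1))),
        IsPath F (m + 1) θ → NonCollapsing θ →
        ∀ x ∈ θ, ∀ y ∈ θ, (replGraph F (m + 1)).dist x y ≤ D) := by
  classical
  refine ⟨fun m θ hp hl => intersection_of_short F hp hl,
    fun m θ hp hnc => intersection_of_nonCollapsing F hp hnc,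
    fun m θ Θ hm hpaths hproj hC => eventually_nonCollapsing F Θ hpaths hproj hC,
    ?_, ?_⟩
  · -- bounded geometry implies a uniform bound for non-collapsing paths
    rintro ⟨D, hD⟩
    refine ⟨D, ?_⟩
    intro m θ hp hnc x hx y hy
    have key : ∀ i j : Fin θ.length, (i : ℕ) ≤ (j : ℕ) →
        (replGraph F (m + 1)).dist (θ.get i) (θ.get j) ≤ D := by
      intro i j hij
      have hjlt := j.isLt
      set seg := (θ.drop (i : ℕ)).take ((j : ℕ) - (i : ℕ) + 1) with hseg
      have hinf : seg <:+: θ :=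
        ((List.take_prefix _ _).isInfix).trans ((List.drop_suffix _ _).isInfix)
      have hlenseg : seg.length = (j : ℕ) - (i : ℕ) + 1 := by
        rw [hseg, List.length_take, List.length_drop]
        omega
      have hhead : seg.head? = some (θ.get i) := by
        rw [List.head?_eq_getElem?, hseg, List.getElem?_take, if_pos (by omega),
          List.getElem?_drop]
        show θ[(i : ℕ)]? = some (θ.get i)
        rw [List.getElem?_eq_getElem i.isLt]
        rfl
      have hlast : seg.getLast? = some (θ.get j) := by
        rw [List.getLast?_eq_getElem?, hlenseg, Nat.add_sub_cancel, hseg,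
          List.getElem?_take, if_pos (by omega), List.getElem?_drop]
        have hidx : (i : ℕ) + ((j : ℕ) - (i : ℕ)) = (j : ℕ) := by omega
        rw [hidx, List.getElem?_eq_getElem j.isLt]
        rfl
      have hsegp : IsPath F (m + 1) seg := by
        refine ⟨?_, hp.2.infix hinf⟩
        intro hnil
        rw [hnil] at hlenseg
        simp at hlenseg
      have hsegnc : NonCollapsing seg := hnc.infix hinf
      have hIP : IsIntersectionPath F m seg :=
        intersection_of_nonCollapsing F hsegp hsegnc
      have mem1 : θ.get i ∈ nbhd F m (θ.get i) := by
        refine ⟨[θ.get i], intersection_of_short F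
          ⟨List.cons_ne_nil _ _, List.isChain_singleton _⟩ (by simp), rfl, rfl⟩
      have mem2 : θ.get j ∈ nbhd F m (θ.get i) := ⟨seg, hIP, hhead, hlast⟩
      exact hD m (θ.get i) _ mem1 _ mem2
    obtain ⟨i, hi⟩ := List.mem_iff_get.mp hx
    obtain ⟨j, hj⟩ := List.mem_iff_get.mp hy
    rcases le_total (i : ℕ) (j : ℕ) with h | h
    · rw [← hi, ← hj]
      exact key i j h
    · rw [← hi, ← hj, SimpleGraph.dist_comm]
      exact key j i h
  · -- a uniform bound for non-collapsing paths implies bounded geometry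
    rintro ⟨D, hD⟩
    refine ⟨2 * D, ?_⟩
    intro m w v₁ h1 v₂ h2
    obtain ⟨θ₁, hIP1, hw1, hv1⟩ := h1
    obtain ⟨θ₂, hIP2, hw2, hv2⟩ := h2
    obtain ⟨p1, hp1⟩ := dist_head_last_of_intersection F hD hIP1 hw1 hv1
    obtain ⟨p2, hp2⟩ := dist_head_last_of_intersection F hD hIP2 hw2 hv2
    have hle := SimpleGraph.dist_le (p1.reverse.append p2)
    rw [SimpleGraph.Walk.length_append, SimpleGraph.Walk.length_reverse] at hle
    omega

end IGSP
end

section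
/- Let 𝔉 be a cubical iterated graph system with parameters (d*,L*,s*). Then for all m ∈ ℕ and all w,v ∈ W_m, d_{G_m}(w,v) ≤ 4·diam(G_1)·L*^m. In particular diam(G_m) ≤ 4·diam(G_1)·L*^m. -/
namespace IGSP

section Statement12Aux

variable {S T : Type} [Nonempty T]

lemma edge_one_iff (F : System S T) (x y : Word S 1) :
    edge F 1 x y ↔ F.E (x 0) (y 0) := by
  simp [edge, replData]

lemma edge_succ_iff (F : System S T) (n : ℕ) (w v : Word S (n + 2)) :
    edge F (n + 2) w v ↔
      (Fin.init w = Fin.init v ∧ F.E (w (Fin.last (n + 1))) (v (Fin.last (n + 1)))) ∨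
      (edge F (n + 1) (Fin.init w) (Fin.init v) ∧
        F.glue (etyp F (n + 1) (Fin.init w) (Fin.init v))
          (w (Fin.last (n + 1))) (v (Fin.last (n + 1)))) := by
  simp [edge, etyp, replData]

lemma edge_snoc_last (F : System S T) {n : ℕ} (u : Word S (n + 1)) {a b : S} (h : F.E a b) :
    edge F (n + 2) (Fin.snoc u a) (Fin.snoc u b) := by
  rw [edge_succ_iff]
  refine Or.inl ⟨by rw [Fin.init_snoc, Fin.init_snoc], ?_⟩
  rw [Fin.snoc_last, Fin.snoc_last]
  exact h

lemma edge_snoc_glue (F : System S T) {n : ℕ} {u v : Word S (n + 1)}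
    (h : edge F (n + 1) u v) {a b : S} (hg : F.glue (etyp F (n + 1) u v) a b) :
    edge F (n + 2) (Fin.snoc u a) (Fin.snoc v b) := by
  rw [edge_succ_iff]
  right
  rw [Fin.init_snoc, Fin.init_snoc, Fin.snoc_last, Fin.snoc_last]
  exact ⟨h, hg⟩

lemma adj_snoc_last (F : System S T) {n : ℕ} (u : Word S (n + 1)) {a b : S}
    (h : F.E a b ∨ F.E b a) :
    (replGraph F (n + 2)).Adj (Fin.snoc u a) (Fin.snoc u b) := by
  have hab : a ≠ b := by
    rintro rfl
    exact F.irrefl a (h.elim id id)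
  refine ⟨?_, ?_⟩
  · intro he
    apply hab
    have := congrFun he (Fin.last (n + 1))
    rwa [Fin.snoc_last, Fin.snoc_last] at this
  · exact h.elim (fun h' => Or.inl (edge_snoc_last F u h'))
      (fun h' => Or.inr (edge_snoc_last F u h'))

lemma lift_last_walk (F : System S T) {n : ℕ} {x y : Word S 1}
    (p : (replGraph F 1).Walk x y) (u : Word S (n + 1)) :
    ∃ q : (replGraph F (n + 2)).Walk (Fin.snoc u (x 0)) (Fin.snoc u (y 0)),
      q.length = p.length := by
  induction p with
  | nil => exact ⟨.nil, rfl⟩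
  | @cons a b c h p ih =>
    obtain ⟨q, hq⟩ := ih
    have hadj : (replGraph F (n + 2)).Adj (Fin.snoc u (a 0)) (Fin.snoc u (b 0)) := by
      apply adj_snoc_last
      rcases h.2 with h' | h'
      · exact Or.inl ((edge_one_iff F _ _).1 h')
      · exact Or.inr ((edge_one_iff F _ _).1 h')
    exact ⟨.cons hadj q, by simp [hq]⟩

lemma snoc_const {m : ℕ} (c : S) :
    (Fin.snoc (fun _ : Fin m => c) c : Word S (m + 1)) = fun _ => c := by
  funext i
  induction i using Fin.lastCases with
  | last => rw [Fin.snoc_last]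
  | cast i => rw [Fin.snoc_castSucc]

end Statement12Aux

section Statement12Cub

variable {d L s : ℕ} (cub : CubicalIGS d L s)

/-- The symbol on the `j`-axis with `c_j = k` and all other data zero. -/
def axS (j : Fin d) (k : ℕ) (hk : k < L) : ↥cub.Symb :=
  ⟨⟨fun i => if i = j then ⟨k, hk⟩ else ⟨0, by have := cub.hL; omega⟩,
    ⟨0, by have := cub.hs; omega⟩⟩, by
    apply cub.C1
    refine ⟨j, fun i hi => Or.inl ?_, rfl⟩
    simp [hi]⟩

lemma axS_onAxis (j : Fin d) (k : ℕ) (hk : k < L) : onAxis j (axS cub j k hk).1 :=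
  ⟨fun i hi => Or.inl (by simp [axS, hi]), rfl⟩

/-- The all-zero corner symbol. -/
def zS : ↥cub.Symb := axS cub ⟨0, cub.hd⟩ 0 (by have := cub.hL; omega)

lemma axS_zero (j : Fin d) (h0 : (0 : ℕ) < L) : axS cub j 0 h0 = zS cub := by
  apply Subtype.ext
  refine Prod.ext ?_ rfl
  funext i
  apply Fin.ext
  simp [axS, zS, apply_ite Fin.val]

lemma axS_E (j : Fin d) (k : ℕ) (hk1 : k + 1 < L) :
    cub.sys.E (axS cub j k (by omega)) (axS cub j (k + 1) hk1) := by
  apply cub.C2 j _ _ (axS_onAxis cub j k (by omega)) (axS_onAxis cub j (k + 1) hk1)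
  refine ⟨fun i hi => ?_, ?_⟩
  · simp [axS, hi]
  · simp [axS]

lemma axS_glue (j : Fin d) :
    cub.sys.glue j (axS cub j (L - 1) (by have := cub.hL; omega))
      (axS cub j 0 (by have := cub.hL; omega)) := by
  apply cub.C3 j _ _ (axS_onAxis cub j (L - 1) (by have := cub.hL; omega))
    (axS_onAxis cub j 0 (by have := cub.hL; omega))
  refine ⟨fun i hi => by simp [axS, hi], by simp [axS], by simp [axS], rfl⟩

variable [Nonempty (Fin d)]

lemma axis_walk_one (j : Fin d) :
    ∃ p : (replGraph cub.sys 1).Walk (fun _ => zS cub)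
        (fun _ => axS cub j (L - 1) (by have := cub.hL; omega)),
      p.length = L - 1 := by
  suffices h : ∀ (k : ℕ) (hk : k < L),
      ∃ p : (replGraph cub.sys 1).Walk (fun _ => zS cub) (fun _ => axS cub j k hk),
        p.length = k from h (L - 1) (by have := cub.hL; omega)
  intro k
  induction k with
  | zero =>
    intro hk
    rw [axS_zero]
    exact ⟨.nil, rfl⟩
  | succ k ih =>
    intro hk
    obtain ⟨p, hp⟩ := ih (by omega)
    have hadj : (replGraph cub.sys 1).Adj (fun _ => axS cub j k (by omega))
        (fun _ => axS cub j (k + 1) hk) := by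
      refine ⟨?_, Or.inl ((edge_one_iff _ _ _).2 (axS_E cub j k hk))⟩
      intro he
      have h0 := congrFun he (0 : Fin 1)
      have hval : ((axS cub j k (by omega)).1.1 j : ℕ) = ((axS cub j (k + 1) hk).1.1 j : ℕ) := by
        rw [h0]
      simp [axS] at hval
    exact ⟨p.append (SimpleGraph.Walk.cons hadj .nil), by simp [hp]⟩

lemma reach_one (F : System (↥cub.Symb) (Fin d)) (x y : Word (↥cub.Symb) 1) :
    (replGraph F 1).Reachable x y := by
  have key : ∀ a b : ↥cub.Symb, (replGraph F 1).Reachable (fun _ => a) (fun _ => b) := by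
    intro a b
    have h := F.conn a b
    induction h with
    | refl => exact .refl _
    | tail hab hbc ih =>
      rename_i b' c'
      refine ih.trans (SimpleGraph.Adj.reachable ?_)
      have hne : b' ≠ c' := by
        rintro rfl
        exact F.irrefl _ (hbc.elim id id)
      exact ⟨fun he => hne (congrFun he 0),
        hbc.imp (fun h' => (edge_one_iff F _ _).2 h') (fun h' => (edge_one_iff F _ _).2 h')⟩
  have hx : x = fun _ => x 0 := by funext i; rw [Subsingleton.elim i 0]
  have hy : y = fun _ => y 0 := by funext i; rw [Subsingleton.elim i 0]
  rw [hx, hy]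
  exact key _ _

lemma walk_to_zero_one [Fintype ↥cub.Symb] (x : Word (↥cub.Symb) 1) :
    ∃ p : (replGraph cub.sys 1).Walk x (fun _ => zS cub),
      p.length ≤ gdiam (replGraph cub.sys 1) := by
  obtain ⟨p, hp⟩ := (reach_one cub cub.sys x (fun _ => zS cub)).exists_walk_length_eq_dist
  refine ⟨p, ?_⟩
  rw [hp]
  exact Finset.le_sup
    (f := fun pr : Word (↥cub.Symb) 1 × Word (↥cub.Symb) 1 => (replGraph cub.sys 1).dist pr.1 pr.2)
    (Finset.mem_univ (x, fun _ => zS cub))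

lemma lift_walk {n : ℕ} {u v : Word (↥cub.Symb) (n + 1)}
    (p : (replGraph cub.sys (n + 1)).Walk u v) :
    ∃ q : (replGraph cub.sys (n + 2)).Walk (Fin.snoc u (zS cub)) (Fin.snoc v (zS cub)),
      q.length ≤ L * p.length := by
  have hL3 := cub.hL
  have harith : ∀ M : ℕ, (L - 1) + (M + 1) = M + L := by intro M; omega
  induction p with
  | nil => exact ⟨.nil, by simp⟩
  | @cons a b c h p ih =>
    obtain ⟨q, hq⟩ := ih
    have hLpos : L - 1 < L := by omega
    rcases h.2 with he | he
    · -- forward edge a → b, of type τ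
      obtain ⟨p1, hp1⟩ := axis_walk_one cub (etyp cub.sys (n + 1) a b)
      obtain ⟨q1, hq1⟩ := lift_last_walk cub.sys p1 a
      have hcross : (replGraph cub.sys (n + 2)).Adj
          (Fin.snoc a (axS cub (etyp cub.sys (n + 1) a b) (L - 1) (by omega)))
          (Fin.snoc b (zS cub)) := by
        constructor
        · intro heq
          have h2 := congrArg Fin.init heq
          rw [Fin.init_snoc, Fin.init_snoc] at h2
          exact h.1 h2
        · left
          have h3 := edge_snoc_glue cub.sys he (axS_glue cub (etyp cub.sys (n + 1) a b))
          rwa [axS_zero] at h3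
      refine ⟨q1.append (SimpleGraph.Walk.cons hcross q), ?_⟩
      rw [SimpleGraph.Walk.length_append, SimpleGraph.Walk.length_cons,
        SimpleGraph.Walk.length_cons, hq1, hp1, Nat.mul_succ]
      have h4 : (L - 1) + (q.length + 1) ≤ (L - 1) + (L * p.length + 1) :=
        Nat.add_le_add_left (Nat.add_le_add_right hq 1) _
      exact le_trans h4 (le_of_eq (harith (L * p.length)))
    · -- backward edge b → a, of type τ
      obtain ⟨p1, hp1⟩ := axis_walk_one cub (etyp cub.sys (n + 1) b a)
      obtain ⟨q1, hq1⟩ := lift_last_walk cub.sys p1.reverse b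
      have hcross : (replGraph cub.sys (n + 2)).Adj
          (Fin.snoc a (zS cub))
          (Fin.snoc b (axS cub (etyp cub.sys (n + 1) b a) (L - 1) (by omega))) := by
        constructor
        · intro heq
          have h2 := congrArg Fin.init heq
          rw [Fin.init_snoc, Fin.init_snoc] at h2
          exact h.1 h2
        · right
          have h3 := edge_snoc_glue cub.sys he (axS_glue cub (etyp cub.sys (n + 1) b a))
          rwa [axS_zero] at h3
      refine ⟨SimpleGraph.Walk.cons hcross (q1.append q), ?_⟩
      rw [SimpleGraph.Walk.length_cons, SimpleGraph.Walk.length_append, hq1,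
        SimpleGraph.Walk.length_reverse, hp1, SimpleGraph.Walk.length_cons, Nat.mul_succ]
      have h4 : (L - 1) + q.length + 1 ≤ (L - 1) + L * p.length + 1 :=
        Nat.add_le_add_right (Nat.add_le_add_left hq _) 1
      refine le_trans h4 (le_of_eq ?_)
      have harith2 : ∀ M : ℕ, (L - 1) + M + 1 = M + L := by intro M; omega
      exact harith2 (L * p.length)

/-- The recursive length bound: `B 0 = D`, `B (n+1) = L * B n + D`. -/
def B12 (D L : ℕ) : ℕ → ℕ
  | 0 => D
  | n + 1 => L * B12 D L n + D

lemma B12_le (D : ℕ) (hL3 : 3 ≤ L) : ∀ n : ℕ, B12 D L n + D ≤ 2 * D * L ^ n := by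
  intro n
  induction n with
  | zero => simp [B12]; omega
  | succ n ih =>
    have h1 : B12 D L (n + 1) + D ≤ L * (B12 D L n + D) := by
      show L * B12 D L n + D + D ≤ L * (B12 D L n + D)
      rw [Nat.mul_add, Nat.add_assoc]
      refine Nat.add_le_add_left ?_ (L * B12 D L n)
      calc D + D ≤ 3 * D := by omega
        _ ≤ L * D := Nat.mul_le_mul_right D hL3
    calc B12 D L (n + 1) + D ≤ L * (B12 D L n + D) := h1
      _ ≤ L * (2 * D * L ^ n) := Nat.mul_le_mul_left L ih
      _ = 2 * D * L ^ (n + 1) := by ring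

lemma to_zero_walk [Fintype ↥cub.Symb] :
    ∀ (n : ℕ) (w : Word (↥cub.Symb) (n + 1)),
      ∃ q : (replGraph cub.sys (n + 1)).Walk w (fun _ => zS cub),
        q.length ≤ B12 (gdiam (replGraph cub.sys 1)) L n := by
  intro n
  induction n with
  | zero => exact fun w => walk_to_zero_one cub w
  | succ n ih =>
    intro w
    obtain ⟨p1, hp1⟩ := walk_to_zero_one cub (fun _ => w (Fin.last (n + 1)))
    obtain ⟨q1, hq1⟩ := lift_last_walk cub.sys p1 (Fin.init w)
    obtain ⟨p2, hp2⟩ := ih (Fin.init w)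
    obtain ⟨q2, hq2⟩ := lift_walk cub p2
    refine ⟨((q1.append q2).copy ?_ ?_), ?_⟩
    · exact Fin.snoc_init_self w
    · exact snoc_const (zS cub)
    · rw [SimpleGraph.Walk.length_copy, SimpleGraph.Walk.length_append]
      have hq1' : q1.length ≤ gdiam (replGraph cub.sys 1) := by rw [hq1]; exact hp1
      have hq2' : q2.length ≤ L * B12 (gdiam (replGraph cub.sys 1)) L n :=
        le_trans hq2 (Nat.mul_le_mul_left L hp2)
      calc q1.length + q2.length
          ≤ gdiam (replGraph cub.sys 1) + L * B12 (gdiam (replGraph cub.sys 1)) L n :=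
            Nat.add_le_add hq1' hq2'
        _ = B12 (gdiam (replGraph cub.sys 1)) L (n + 1) := by
            show _ = L * B12 (gdiam (replGraph cub.sys 1)) L n + gdiam (replGraph cub.sys 1)
            exact Nat.add_comm _ _

end Statement12Cub

/-- In a cubical iterated graph system, for all `m ≥ 1` and all words
`w, v ∈ W_m`, `d_{G_m}(w,v) ≤ 4 · diam(G₁) · L*^m`; in particular
`diam(G_m) ≤ 4 · diam(G₁) · L*^m`. -/
theorem statement12 (d L s : ℕ) (cub : CubicalIGS d L s) (m : ℕ) (hm : 1 ≤ m) :
    letI : Nonempty (Fin d) := ⟨⟨0, cub.hd⟩⟩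
    letI : Fintype ↥cub.Symb := (Set.toFinite cub.Symb).fintype
    (∀ w v : Word (↥cub.Symb) m,
      (replGraph cub.sys m).dist w v ≤ 4 * gdiam (replGraph cub.sys 1) * L ^ m) ∧
    gdiam (replGraph cub.sys m) ≤ 4 * gdiam (replGraph cub.sys 1) * L ^ m := by
  letI : Nonempty (Fin d) := ⟨⟨0, cub.hd⟩⟩
  letI : Fintype ↥cub.Symb := (Set.toFinite cub.Symb).fintype
  obtain ⟨n, rfl⟩ : ∃ n, m = n + 1 := ⟨m - 1, by omega⟩
  set D := gdiam (replGraph cub.sys 1) with hD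
  have key : ∀ w v : Word (↥cub.Symb) (n + 1),
      (replGraph cub.sys (n + 1)).dist w v ≤ 4 * D * L ^ (n + 1) := by
    intro w v
    obtain ⟨p, hp⟩ := to_zero_walk cub n w
    obtain ⟨q, hq⟩ := to_zero_walk cub n v
    have h1 := SimpleGraph.dist_le (p.append q.reverse)
    rw [SimpleGraph.Walk.length_append, SimpleGraph.Walk.length_reverse] at h1
    have h2 : B12 D L n ≤ 2 * D * L ^ n := by
      have := B12_le (L := L) D cub.hL n
      omega
    have h3 : 2 * D * L ^ n + 2 * D * L ^ n ≤ 4 * D * L ^ (n + 1) := by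
      have hpow : L ^ n ≤ L ^ (n + 1) :=
        Nat.pow_le_pow_right (by have := cub.hL; omega) (by omega)
      calc 2 * D * L ^ n + 2 * D * L ^ n = 4 * D * L ^ n := by ring
        _ ≤ 4 * D * L ^ (n + 1) := Nat.mul_le_mul_left (4 * D) hpow
    calc (replGraph cub.sys (n + 1)).dist w v ≤ p.length + q.length := h1
      _ ≤ B12 D L n + B12 D L n := Nat.add_le_add hp hq
      _ ≤ 2 * D * L ^ n + 2 * D * L ^ n := Nat.add_le_add h2 h2
      _ ≤ 4 * D * L ^ (n + 1) := h3
  refine ⟨key, ?_⟩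
  exact Finset.sup_le fun pr _ => key pr.1 pr.2

end IGSP
end
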